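/- Let a ∈ c₀(ℤ, K) and let ϖ ∈ K with 0 < ‖ϖ‖ < 1 be such that ‖a_i‖ ≤ ‖ϖ‖ for all i ∈ ℤ. Then for every i ∈ ℤ the series b_i := − Σ_{k≥0} (a_{i−k})^{q^k} converges in K, the resulting sequence b = (b_i)_{i∈ℤ} lies in c₀(ℤ, K) (i.e. b_i → 0 as i → ±∞), and (b_{i−1})^q − b_i = a_i for all i ∈ ℤ. In particular, every element of c₀(ℤ, K) all of whose coefficients have norm at most ‖ϖ‖ lies in the image of F − 1. -/

import Mathlib

open Filter

/-- A two-sided sequence `b : ℤ → K` tends to `0` as `|i| → ∞`,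
i.e. it lies in `c₀(ℤ, K)`. -/
def IsC0 {K : Type*} [NormedField K] (b : ℤ → K) : Prop :=
  Tendsto b cofinite (nhds 0)

/-- In an ultrametric normed field, the norm of a convergent sum is bounded
by any uniform bound on the terms. -/
lemma norm_hasSum_le {K : Type*} [NormedField K] [IsUltrametricDist K]
    {f : ℕ → K} {t : K} {C : ℝ} (ht : HasSum f t) (h0 : 0 ≤ C)
    (h : ∀ k, ‖f k‖ ≤ C) : ‖t‖ ≤ C := by
  refine le_of_tendsto ((continuous_norm.tendsto t).comp ht) ?_
  filter_upwards with s
  exact IsUltrametricDist.norm_sum_le_of_forall_le_of_nonneg h0 fun i _ => h i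

lemma norm_sum_lt' {K : Type*} [NormedField K] [IsUltrametricDist K]
    {s : Finset ℕ} {g : ℕ → K} {ε : ℝ} (hε : 0 < ε)
    (h : ∀ k ∈ s, ‖g k‖ < ε) : ‖∑ k ∈ s, g k‖ < ε := by
  rcases s.eq_empty_or_nonempty with rfl | hs
  · simpa using hε
  · exact (hs.norm_sum_le_sup'_norm g).trans_lt ((Finset.sup'_lt_iff hs).mpr h)

/-- Let `K` be a complete nonarchimedean field of characteristic `p`, `q = p ^ f`.
If `a ∈ c₀(ℤ, K)` and `ϖ ∈ K` with `0 < ‖ϖ‖ < 1` satisfies `‖a i‖ ≤ ‖ϖ‖` for all `i`,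
then the series `b i = -∑_{k ≥ 0} (a (i - k)) ^ (q ^ k)` converge, the resulting
sequence `b` lies in `c₀(ℤ, K)`, and `(b (i - 1)) ^ q - b i = a i` for all `i`;
in particular `a` lies in the image of `F - 1`. -/
theorem exists_preimage_of_FSubOne_of_norm_le
    (p f q : ℕ) (hp : p.Prime) (hf : 1 ≤ f) (hq : q = p ^ f)
    (K : Type*) [NontriviallyNormedField K] [IsUltrametricDist K]
    [CompleteSpace K] [CharP K p]
    (a : ℤ → K) (ha : IsC0 a)
    (ϖ : K) (hϖ0 : 0 < ‖ϖ‖) (hϖ1 : ‖ϖ‖ < 1)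
    (hbound : ∀ i : ℤ, ‖a i‖ ≤ ‖ϖ‖) :
    ∃ b : ℤ → K,
      (∀ i : ℤ, HasSum (fun k : ℕ => -((a (i - (k : ℤ))) ^ q ^ k)) (b i)) ∧
      IsC0 b ∧
      (∀ i : ℤ, (b (i - 1)) ^ q - b i = a i) := by
  have hq1 : 1 < q := by
    rw [hq]
    calc 1 < p := hp.one_lt
    _ ≤ p ^ f := Nat.le_self_pow (by omega) p
  set term : ℤ → ℕ → K := fun i k => -((a (i - (k : ℤ))) ^ q ^ k) with hterm
  have hϖle1 : ‖ϖ‖ ≤ 1 := hϖ1.le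
  have hnorm : ∀ i k, ‖term i k‖ = ‖a (i - (k : ℤ))‖ ^ q ^ k := by
    intro i k; rw [hterm]; simp [norm_pow]
  have hle1 : ∀ i k, ‖term i k‖ ≤ ‖ϖ‖ ^ (k + 1) := by
    intro i k
    rw [hnorm]
    calc ‖a (i - (k : ℤ))‖ ^ q ^ k ≤ ‖ϖ‖ ^ q ^ k :=
          pow_le_pow_left₀ (norm_nonneg _) (hbound _) _
      _ ≤ ‖ϖ‖ ^ (k + 1) :=
          pow_le_pow_of_le_one (norm_nonneg _) hϖle1 (Nat.lt_pow_self hq1)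
  have hle2 : ∀ i k, ‖term i k‖ ≤ ‖a (i - (k : ℤ))‖ := by
    intro i k
    rw [hnorm]
    exact pow_le_of_le_one (norm_nonneg _) ((hbound _).trans hϖle1) (pow_ne_zero _ (by omega))
  have hpowlim : Tendsto (fun k : ℕ => ‖ϖ‖ ^ k) atTop (nhds 0) :=
    tendsto_pow_atTop_nhds_zero_of_lt_one (norm_nonneg _) hϖ1
  have hsum : ∀ i, Summable (term i) := by
    intro i
    apply NonarchimedeanAddGroup.summable_of_tendsto_cofinite_zero
    rw [Nat.cofinite_eq_atTop]
    exact squeeze_zero_norm (hle1 i) (hpowlim.comp (tendsto_add_atTop_nat 1))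
  refine ⟨fun i => ∑' k, term i k, fun i => (hsum i).hasSum, ?_, ?_⟩
  · -- c₀ property
    rw [IsC0, Metric.tendsto_nhds]
    intro ε hε
    obtain ⟨N, hN⟩ : ∃ N : ℕ, ‖ϖ‖ ^ N < ε :=
      ((hpowlim.eventually (gt_mem_nhds hε)).exists)
    have key : ∀ᶠ i in cofinite, ∀ k ∈ Finset.range N, ‖a (i - (k : ℤ))‖ < ε := by
      rw [eventually_all_finset]
      intro k _
      have hshift : Tendsto (fun i : ℤ => a (i - (k : ℤ))) cofinite (nhds 0) :=
        ha.comp ((sub_left_injective (b := (k : ℤ))).tendsto_cofinite)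
      have := Metric.tendsto_nhds.mp hshift ε hε
      simpa [dist_zero_right] using this
    filter_upwards [key] with i hi
    rw [dist_zero_right]
    rw [← Summable.sum_add_tsum_nat_add N (hsum i)]
    refine lt_of_le_of_lt (IsUltrametricDist.norm_add_le_max _ _) (max_lt ?_ ?_)
    · exact norm_sum_lt' hε fun k hk => (hle2 i k).trans_lt (hi k hk)
    · have htail : HasSum (fun k => term i (k + N)) (∑' k, term i (k + N)) :=
        ((summable_nat_add_iff N).mpr (hsum i)).hasSum
      refine lt_of_le_of_lt (norm_hasSum_le htail (pow_nonneg (norm_nonneg _) N) ?_) hN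
      intro k
      exact (hle1 i (k + N)).trans
        (pow_le_pow_of_le_one (norm_nonneg _) hϖle1 (by omega))
  · -- recurrence
    intro i
    haveI : Fact p.Prime := ⟨hp⟩
    set φ : K →+* K := iterateFrobenius K p f with hφdef
    have hφ : ∀ x : K, φ x = x ^ q := fun x => by
      rw [hφdef, iterateFrobenius_def, hq]
    have hcont : Continuous φ := by
      have : ⇑φ = fun x : K => x ^ q := funext hφ
      rw [this]; exact continuous_pow q
    have hmap : HasSum (⇑φ ∘ term (i - 1)) (φ (∑' k, term (i - 1) k)) :=
      (hsum (i - 1)).hasSum.map φ hcont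
    have heq : ⇑φ ∘ term (i - 1) = fun k => term i (k + 1) := by
      funext k
      show φ (-(a (i - 1 - (k : ℤ)) ^ q ^ k)) = -(a (i - ((k + 1 : ℕ) : ℤ)) ^ q ^ (k + 1))
      rw [map_neg, map_pow, hφ, ← pow_mul, ← pow_succ']
      congr 2
      push_cast; ring
    rw [heq, hφ (∑' k, term (i - 1) k)] at hmap
    have hshift : HasSum (fun k => term i (k + 1)) ((∑' k, term i k) - ∑ j ∈ Finset.range 1, term i j) :=
      (hasSum_nat_add_iff' 1).mpr (hsum i).hasSum
    have huniq := hmap.unique hshift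
    have ht0 : (∑ j ∈ Finset.range 1, term i j) = -(a i) := by
      simp [hterm]
    rw [ht0, sub_neg_eq_add] at huniq
    rw [huniq]; ring
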